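/- arXiv:1603.02671 — 2 statements merged into one kernel-verified Lean document; each statement's English description precedes it below -/
import Mathlib

section
/- Let C be a (possibly nonlinear) code of length N over an alphabet of size q with minimum distance d and dual distance d⊥, and let 1 ≤ s < d⊥ − 2 (in the sense that coordinates of a uniformly random codeword restricted to any d⊥ − 1 positions are uniformly distributed). Then the construction that takes a uniform random codeword whose first s coordinates equal the secret and distributes the remaining N − s coordinates as shares yields a (τ_1, τ_2, N − s)-ramp scheme with τ_1 = d⊥ − s − 1 and τ_2 = N − d + 1: any τ_2 shares determine the secret, and any τ_1 shares give no information about the secret. -/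
open Finset

/-- Ramp schemes from codes (Paterson–Stinson): let `C` be a (possibly nonlinear)
code of length `N` over an alphabet `Alph` of size `q`, with minimum distance `d`
(every two distinct codewords are at Hamming distance at least `d`) and dual
distance `d⊥` (the restriction of the uniform distribution on `C` to any `d⊥ - 1`
coordinates is uniform).  Take `1 ≤ s` with `s + 2 < d⊥` (i.e. `s < d⊥ - 2`), let
the secret of a random codeword be its first `s` coordinates and the shares be the
remaining `N - s` coordinates.  Then:
  (reconstruction) any `τ₂ = N - d + 1` shares determine the secret, and
  (secrecy) for any `τ₁ = d⊥ - s - 1` (or fewer) shares, the joint distribution of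
  (secret, shares) is uniform — i.e. the shares give no information about the secret. -/
theorem stmt_12 {Alph : Type*} [Fintype Alph] [DecidableEq Alph]
    (N d dperp s : ℕ) (C : Finset (Fin N → Alph)) (hC : C.Nonempty)
    (hdist : ∀ u ∈ C, ∀ v ∈ C, u ≠ v → d ≤ hammingDist u v)
    (hdual : ∀ T : Finset (Fin N), T.card ≤ dperp - 1 → ∀ y : Fin N → Alph,
      (C.filter (fun c => ∀ i ∈ T, c i = y i)).card * Fintype.card Alph ^ T.card = C.card)
    (hs1 : 1 ≤ s) (hs2 : s + 2 < dperp) (hsN : s ≤ N) :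
    (∀ T : Finset (Fin N), (∀ i ∈ T, s ≤ (i : ℕ)) → T.card = N - d + 1 →
      ∀ u ∈ C, ∀ v ∈ C, (∀ i ∈ T, u i = v i) →
        ∀ i : Fin N, (i : ℕ) < s → u i = v i) ∧
    (∀ T : Finset (Fin N), (∀ i ∈ T, s ≤ (i : ℕ)) → T.card ≤ dperp - s - 1 →
      ∀ m y : Fin N → Alph,
        (C.filter (fun c => (∀ i : Fin N, (i : ℕ) < s → c i = m i) ∧
            ∀ i ∈ T, c i = y i)).card * Fintype.card Alph ^ (s + T.card) = C.card) := by
  constructor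
  · intro T hTs hTcard u hu v hv huv i hi
    by_cases h : u = v
    · rw [h]
    · exfalso
      have hd := hdist u hu v hv h
      have hdisj : Disjoint (Finset.univ.filter fun i => u i ≠ v i) T := by
        rw [Finset.disjoint_left]
        intro a ha haT
        simp only [Finset.mem_filter] at ha
        exact ha.2 (huv a haT)
      have hcard : (Finset.univ.filter fun i => u i ≠ v i).card + T.card ≤ N := by
        rw [← Finset.card_union_of_disjoint hdisj]
        simpa using Finset.card_le_univ ((Finset.univ.filter fun i => u i ≠ v i) ∪ T)
      have hd' : d ≤ (Finset.univ.filter fun i => u i ≠ v i).card := by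
        simpa [hammingDist] using hd
      omega
  · intro T hTs hTcard m y
    set F : Finset (Fin N) := Finset.univ.filter (fun i => (i : ℕ) < s) with hF
    have hFcard : F.card = s := by
      have himg : F = Finset.univ.image (Fin.castLE hsN) := by
        ext i
        simp only [hF, Finset.mem_filter, Finset.mem_image, Finset.mem_univ, true_and]
        constructor
        · intro h; exact ⟨⟨i, h⟩, Fin.ext rfl⟩
        · rintro ⟨j, rfl⟩; exact j.isLt
      rw [himg, Finset.card_image_of_injective _ (Fin.castLE_injective hsN)]
      simp
    have hdisj : Disjoint F T := by
      rw [Finset.disjoint_left]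
      intro a ha haT
      simp only [hF, Finset.mem_filter] at ha
      have := hTs a haT
      omega
    set S := F ∪ T with hS
    have hScard : S.card = s + T.card := by
      rw [hS, Finset.card_union_of_disjoint hdisj, hFcard]
    set y' : Fin N → Alph := fun i => if (i : ℕ) < s then m i else y i with hy'
    have key := hdual S (by omega) y'
    rw [hScard] at key
    rw [← key]
    have hset : (C.filter (fun c => (∀ i : Fin N, (i : ℕ) < s → c i = m i) ∧
        ∀ i ∈ T, c i = y i)) = C.filter (fun c => ∀ i ∈ S, c i = y' i) := by
      ext c
      simp only [Finset.mem_filter, hS, Finset.mem_union, hF, Finset.mem_filter,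
        Finset.mem_univ, true_and, hy']
      constructor
      · rintro ⟨hc, h1, h2⟩
        refine ⟨hc, ?_⟩
        intro i hi
        rcases hi with hi | hi
        · rw [if_pos hi]; exact h1 i hi
        · have hns : ¬ (i : ℕ) < s := Nat.not_lt.mpr (hTs i hi)
          rw [if_neg hns]; exact h2 i hi
      · rintro ⟨hc, h⟩
        refine ⟨hc, ?_, ?_⟩
        · intro i hi
          have := h i (Or.inl hi); rwa [if_pos hi] at this
        · intro i hi
          have hns : ¬ (i : ℕ) < s := Nat.not_lt.mpr (hTs i hi)
          have := h i (Or.inr hi); rwa [if_neg hns] at this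
    rw [hset]
end

section
/- In the optimized multi-server Shacham-Waters scheme, where a^{(i)} = g(i) and b_j^{(i)} = f_j(i) for independently uniformly random polynomials g, f_1, ..., f_n ∈ F_q[x] of degree at most τ_1 − 1, any collection of τ_1 provers with indices I = {i_1, ..., i_{τ_1}} (distinct elements of F_q) observing all their message-tag pairs S_i[j] = b_j^{(i)} + a^{(i)}·M_i[j] learns nothing about the joint key tuple beyond what a single prover learns: conditioned on the observations, the tuple (a^{(i)})_{i∈I} is uniformly distributed over F_q^{τ_1}. -/
open Finset

/-- In the optimized multi-server Shacham–Waters scheme, keys are derived as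
`a^(i) = g(I i)` and `b_j^(i) = f_j(I i)` from independently uniform polynomials
`g, f₁, …, f_n` of degree `≤ τ₁ - 1`.  Any coalition of `τ₁` provers at distinct
indices `I` observing all message-tag pairs `S i j = f_j(I i) + g(I i)·M i j`
learns nothing about the tuple `(a^(i))_{i}`: for every observation `S` and every
target tuple `A ∈ F^{τ₁}`, exactly one choice of the coefficient vectors of
`g, f₁, …, f_n` is consistent with both — i.e. conditioned on the observations,
`(g(I i))_i` is uniform on `F^{τ₁}`. -/
theorem stmt_16 {F : Type*} [Field F] [Fintype F] [DecidableEq F]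
    (n τ₁ : ℕ) (hτ₁ : 1 ≤ τ₁)
    (I : Fin τ₁ → F) (hI : Function.Injective I)
    (M : Fin τ₁ → Fin n → F) :
    ∀ (S : Fin τ₁ → Fin n → F) (A : Fin τ₁ → F),
      (Finset.univ.filter
        (fun cgf : (Fin τ₁ → F) × (Fin n → Fin τ₁ → F) =>
          (∀ i, (∑ k : Fin τ₁, cgf.1 k * I i ^ (k : ℕ)) = A i) ∧
          (∀ i j, S i j = (∑ k : Fin τ₁, cgf.2 j k * I i ^ (k : ℕ)) +
              (∑ k : Fin τ₁, cgf.1 k * I i ^ (k : ℕ)) * M i j))).card = 1 := by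
  intro S A
  set V : Matrix (Fin τ₁) (Fin τ₁) F := Matrix.vandermonde I with hV
  have hdet : V.det ≠ 0 := by
    rw [hV, Matrix.det_vandermonde]
    refine Finset.prod_ne_zero_iff.2 fun i _ => Finset.prod_ne_zero_iff.2 fun j hj => ?_
    have : i < j := by simpa using hj
    exact sub_ne_zero.2 fun h => absurd (hI h) (Fin.ne_of_gt this)
  have hunit : IsUnit V := by
    rwa [Matrix.isUnit_iff_isUnit_det, isUnit_iff_ne_zero]
  have hinj : Function.Injective V.mulVec := Matrix.mulVec_injective_iff_isUnit.2 hunit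
  have hsurj : Function.Surjective V.mulVec := Matrix.mulVec_surjective_iff_isUnit.2 hunit
  have hmv : ∀ (c : Fin τ₁ → F) (i : Fin τ₁),
      V.mulVec c i = ∑ k : Fin τ₁, c k * I i ^ (k : ℕ) := by
    intro c i
    simp [Matrix.mulVec, dotProduct, Matrix.vandermonde, mul_comm, hV]
  obtain ⟨cg, hcg⟩ := hsurj A
  have hcf : ∀ j : Fin n, ∃ c : Fin τ₁ → F, V.mulVec c = fun i => S i j - A i * M i j :=
    fun j => hsurj _
  choose cf hcfs using hcf
  rw [Finset.card_eq_one]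
  refine ⟨(cg, cf), ?_⟩
  ext ⟨c1, c2⟩
  simp only [Finset.mem_filter, Finset.mem_univ, true_and, Finset.mem_singleton,
    Prod.mk.injEq]
  constructor
  · rintro ⟨h1, h2⟩
    have hc1 : c1 = cg := by
      apply hinj
      rw [hcg]; ext i; rw [hmv]; exact h1 i
    refine ⟨hc1, ?_⟩
    funext j
    apply hinj
    rw [hcfs j]
    funext i
    rw [hmv]
    have := h2 i j
    have hA : (∑ k : Fin τ₁, c1 k * I i ^ (k : ℕ)) = A i := h1 i
    rw [hA] at this
    rw [this]; ring
  · rintro ⟨rfl, rfl⟩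
    constructor
    · intro i; rw [← hmv, hcg]
    · intro i j
      have h1 : V.mulVec c1 i = A i := by rw [hcg]
      have h2' : V.mulVec (c2 j) i = S i j - A i * M i j := by rw [hcfs j]
      rw [hmv] at h1 h2'
      rw [h1, h2']; ring
end
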